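/- Let k ≥ 3 and define u(r) = (-log r) · r^{-(k-2)/2} for r ∈ (0,1). Then u > 0 on (0,1), u''(r) ≥ u'(r)/r for all r ∈ (0,1), and u''(r) + (k-1)u'(r)/r + ((k-2)²/4) · u(r)/r² = 0 for all r ∈ (0,1). -/

import Mathlib

open Set

lemma hda1 (a : ℝ) (x : ℝ) (hx : 0 < x) :
    HasDerivAt (fun y : ℝ => (-Real.log y) * y ^ (-a))
      (x ^ (-a - 1) * (-1 + a * Real.log x)) x := by
  have h1 : HasDerivAt Real.log x⁻¹ x := Real.hasDerivAt_log hx.ne'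
  have h2 : HasDerivAt (fun y : ℝ => y ^ (-a)) ((-a) * x ^ (-a - 1)) x :=
    Real.hasDerivAt_rpow_const (Or.inl hx.ne')
  have h := h1.neg.mul h2
  refine h.congr_deriv ?_
  rw [show (-a - 1) = -a + (-1) by ring, Real.rpow_add hx, Real.rpow_neg_one]
  rw [Pi.neg_apply]
  ring

lemma hda2 (a : ℝ) (x : ℝ) (hx : 0 < x) :
    HasDerivAt (fun y : ℝ => y ^ (-a - 1) * (-1 + a * Real.log y))
      (x ^ (-a - 2) * ((2 * a + 1) - a * (a + 1) * Real.log x)) x := by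
  have h1 : HasDerivAt (fun y : ℝ => y ^ (-a - 1)) ((-a - 1) * x ^ (-a - 1 - 1)) x :=
    Real.hasDerivAt_rpow_const (Or.inl hx.ne')
  have h2 : HasDerivAt (fun y : ℝ => -1 + a * Real.log y) (a * x⁻¹) x := by
    simpa using ((Real.hasDerivAt_log hx.ne').const_mul a).const_add (-1)
  have h := h1.mul h2
  refine h.congr_deriv ?_
  rw [show (-a - 1 - 1) = -a - 2 by ring,
    show (-a - 2 : ℝ) = (-a - 1) + (-1) by ring, Real.rpow_add hx, Real.rpow_neg_one]
  ring

theorem stmt6 (k : ℕ) (hk : 3 ≤ k)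
    (u : ℝ → ℝ) (hu : ∀ r : ℝ, u r = (-Real.log r) * r ^ (-(((k:ℝ) - 2) / 2))) :
    ∀ r ∈ Ioo (0:ℝ) 1,
      0 < u r ∧
      deriv u r / r ≤ deriv (deriv u) r ∧
      deriv (deriv u) r + ((k:ℝ) - 1) * deriv u r / r
        + (((k:ℝ) - 2) ^ 2 / 4) * u r / r ^ 2 = 0 := by
  set a : ℝ := ((k:ℝ) - 2) / 2 with ha
  have hk3 : (3:ℝ) ≤ (k:ℝ) := by exact_mod_cast hk
  have haq : (1:ℝ)/2 ≤ a := by rw [ha]; linarith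
  have hue : u = fun y : ℝ => (-Real.log y) * y ^ (-a) := by
    funext y; rw [hu y]
  have hD1 : ∀ x : ℝ, 0 < x → deriv u x = x ^ (-a - 1) * (-1 + a * Real.log x) := by
    intro x hx
    rw [hue]
    exact (hda1 a x hx).deriv
  intro r hr
  obtain ⟨hr0, hr1⟩ := hr
  have hlog : Real.log r < 0 := Real.log_neg hr0 hr1
  have hrp : 0 < r ^ (-a) := Real.rpow_pos_of_pos hr0 _
  have hrp1 : 0 < r ^ (-a - 1) := Real.rpow_pos_of_pos hr0 _
  have hrp2 : 0 < r ^ (-a - 2) := Real.rpow_pos_of_pos hr0 _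
  -- second derivative
  have hev : deriv u =ᶠ[nhds r] fun y : ℝ => y ^ (-a - 1) * (-1 + a * Real.log y) := by
    filter_upwards [isOpen_Ioi.mem_nhds (show r ∈ Ioi (0:ℝ) from hr0)] with x hx
    exact hD1 x hx
  have hD2 : deriv (deriv u) r
      = r ^ (-a - 2) * ((2 * a + 1) - a * (a + 1) * Real.log r) := by
    rw [hev.deriv_eq]
    exact (hda2 a r hr0).deriv
  have hrpow1 : r ^ (-a - 1) = r ^ (-a) * r⁻¹ := by
    rw [show (-a - 1 : ℝ) = -a + (-1) by ring, Real.rpow_add hr0, Real.rpow_neg_one]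
  have hrpow2 : r ^ (-a - 2) = r ^ (-a) * r⁻¹ * r⁻¹ := by
    rw [show (-a - 2 : ℝ) = -a + (-1) + (-1) by ring, Real.rpow_add hr0,
      Real.rpow_add hr0, Real.rpow_neg_one]
  refine ⟨?_, ?_, ?_⟩
  · rw [hu r]
    exact mul_pos (by linarith) hrp
  · rw [hD1 r hr0, hD2]
    rw [hrpow1, hrpow2]
    have h1 : 0 < r⁻¹ := inv_pos.mpr hr0
    rw [div_le_iff₀ hr0]
    have hco : 0 ≤ 2 * a + 2 - a * (a + 2) * Real.log r := by
      nlinarith [mul_pos (mul_pos (show (0:ℝ) < a by linarith) (show (0:ℝ) < a + 2 by linarith))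
        (neg_pos.mpr hlog)]
    have hkey : 0 ≤ r ^ (-a) * r⁻¹ * (2 * a + 2 - a * (a + 2) * Real.log r) :=
      mul_nonneg (le_of_lt (mul_pos hrp h1)) hco
    have heq : r ^ (-a) * r⁻¹ * r⁻¹ * (2 * a + 1 - a * (a + 1) * Real.log r) * r
        - r ^ (-a) * r⁻¹ * (-1 + a * Real.log r)
        = r ^ (-a) * r⁻¹ * (2 * a + 2 - a * (a + 2) * Real.log r) := by
      field_simp
      ring
    linarith
  · rw [hu r, hD1 r hr0, hD2, hrpow1, hrpow2]
    have h2 : ((k:ℝ) - 2) = 2 * a := by rw [ha]; ring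
    rw [h2]
    field_simp
    ring
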